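/- Let M be an n × n Hermitian tridiagonal matrix and let c₁, …, cₙ and d₁, …, dₙ be nonnegative real numbers such that M_{i,i} ≥ cᵢ² + dᵢ² for all i and |M_{i,i+1}| ≤ dᵢ c_{i+1} for 1 ≤ i < n. Then M is positive semidefinite. -/

import Mathlib

open scoped ComplexOrder

/-- **Positivity of a dominated Hermitian tridiagonal matrix.**
If `M` is an `n × n` Hermitian tridiagonal matrix with `M i i ≥ cᵢ² + dᵢ²` and
`|M i (i+1)| ≤ dᵢ * c_(i+1)` for nonnegative reals `cᵢ, dᵢ`, then `M` is positive
semidefinite. -/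
theorem stmt_2 {n : ℕ} (M : Matrix (Fin n) (Fin n) ℂ) (hM : M.IsHermitian)
    (c d : Fin n → ℝ) (hc : ∀ i, 0 ≤ c i) (hd : ∀ i, 0 ≤ d i)
    (htri : ∀ i j : Fin n, 1 < |(i : ℤ) - (j : ℤ)| → M i j = 0)
    (hdiag : ∀ i : Fin n, (c i) ^ 2 + (d i) ^ 2 ≤ (M i i).re)
    (hoff : ∀ i j : Fin n, (j : ℕ) = (i : ℕ) + 1 → ‖M i j‖ ≤ d i * c j) :
    M.PosSemidef := by
  classical
  let L : Matrix (Fin n) (Fin n) ℂ := Matrix.of fun k j =>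
    if (k : ℕ) = (j : ℕ) then (c j : ℂ)
    else if (k : ℕ) = (j : ℕ) + 1 then (starRingEnd ℂ) (M j k) / (c k : ℂ)
    else 0
  have hL : ∀ k j : Fin n, L k j =
      if (k : ℕ) = (j : ℕ) then (c j : ℂ)
      else if (k : ℕ) = (j : ℕ) + 1 then (starRingEnd ℂ) (M j k) / (c k : ℂ)
      else 0 := fun k j => rfl
  have hL0 : ∀ k j : Fin n, (k : ℕ) ≠ (j : ℕ) → (k : ℕ) ≠ (j : ℕ) + 1 → L k j = 0 := by
    intro k j h1 h2; rw [hL]; simp [h1, h2]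
  let A := Matrix.conjTranspose L * L
  have hAapp : ∀ i j, A i j = ∑ k, (starRingEnd ℂ) (L k i) * L k j := by
    intro i j
    simp [A, Matrix.mul_apply, Matrix.conjTranspose_apply]
  -- adjacent off-diagonal
  have hadj : ∀ i j : Fin n, (j : ℕ) = (i : ℕ) + 1 → A i j = M i j := by
    intro i j hij
    rw [hAapp]
    rw [Finset.sum_eq_single j]
    · have h1 : (j : ℕ) ≠ (i : ℕ) := by omega
      have hLji : L j i = (starRingEnd ℂ) (M i j) / (c j : ℂ) := by
        rw [hL]; simp [h1, hij]
      have hLjj : L j j = (c j : ℂ) := by rw [hL]; simp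
      rw [hLji, hLjj]
      by_cases hcj : c j = 0
      · have h0 : ‖M i j‖ ≤ 0 := by
          have := hoff i j hij; rw [hcj, mul_zero] at this; exact this
        have hMz : M i j = 0 := by
          have := le_antisymm h0 (norm_nonneg _)
          exact norm_eq_zero.mp this
        simp [hcj, hMz]
      · have hcj' : (c j : ℂ) ≠ 0 := by exact_mod_cast hcj
        rw [map_div₀, Complex.conj_conj, Complex.conj_ofReal]
        exact div_mul_cancel₀ _ hcj'
    · intro k _ hk
      have hk' : (k : ℕ) ≠ (j : ℕ) := fun h => hk (Fin.ext h)
      by_cases h1 : (k : ℕ) = (i : ℕ)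
      · have hz : L k j = 0 := hL0 k j (by omega) (by omega)
        rw [hz, mul_zero]
      · by_cases h2 : (k : ℕ) = (i : ℕ) + 1
        · omega
        · rw [hL0 k i h1 h2, map_zero, zero_mul]
    · intro h; exact absurd (Finset.mem_univ j) h
  -- far off-diagonal
  have hfar : ∀ i j : Fin n, (i : ℕ) + 1 < (j : ℕ) → A i j = 0 := by
    intro i j hij
    rw [hAapp]
    apply Finset.sum_eq_zero
    intro k _
    by_cases h1 : (k : ℕ) = (i : ℕ)
    · rw [hL0 k j (by omega) (by omega), mul_zero]
    · by_cases h2 : (k : ℕ) = (i : ℕ) + 1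
      · rw [hL0 k j (by omega) (by omega), mul_zero]
      · rw [hL0 k i h1 h2, map_zero, zero_mul]
  have hAherm : A.IsHermitian := Matrix.isHermitian_conjTranspose_mul_self L
  have hoffall : ∀ i j : Fin n, i ≠ j → A i j = M i j := by
    intro i j hij
    rcases lt_trichotomy (i : ℕ) (j : ℕ) with h | h | h
    · by_cases h1 : (j : ℕ) = (i : ℕ) + 1
      · exact hadj i j h1
      · rw [hfar i j (by omega), htri i j ?_]
        refine lt_abs.mpr (Or.inr ?_)
        omega
    · exact absurd (Fin.ext h) hij
    · have eM : star (M j i) = M i j := hM.apply i j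
      have eA : star (A j i) = A i j := hAherm.apply i j
      by_cases h1 : (i : ℕ) = (j : ℕ) + 1
      · rw [← eA, ← eM, hadj j i h1]
      · rw [← eA, ← eM, hfar j i (by omega),
          htri j i (lt_abs.mpr (Or.inr (by omega)))]
  -- diagonal comparison
  have hdiagle : ∀ i : Fin n, 0 ≤ M i i - A i i := by
    intro i
    have hMii : M i i = ((M i i).re : ℂ) := by
      have h := hM.apply i i
      exact (Complex.conj_eq_iff_re.mp h).symm
    have hterm : ∀ k : Fin n, (starRingEnd ℂ) (L k i) * L k i =
        ((Complex.normSq (L k i) : ℝ) : ℂ) := by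
      intro k; rw [Complex.normSq_eq_conj_mul_self]
    have hAii : A i i = ((∑ k, Complex.normSq (L k i) : ℝ) : ℂ) := by
      rw [hAapp]; push_cast
      exact Finset.sum_congr rfl fun k _ => hterm k
    have hbound : ∑ k, Complex.normSq (L k i) ≤ c i ^ 2 + d i ^ 2 := by
      have hle : ∀ k : Fin n, Complex.normSq (L k i) ≤
          (if k = i then c i ^ 2 else 0) +
          (if (k : ℕ) = (i : ℕ) + 1 then d i ^ 2 else 0) := by
        intro k
        by_cases h1 : (k : ℕ) = (i : ℕ)
        · have hki : k = i := Fin.ext h1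
          have h2 : ¬((k : ℕ) = (i : ℕ) + 1) := by omega
          rw [hL, if_pos h1, if_pos hki, if_neg h2, add_zero,
            Complex.normSq_ofReal, sq]
        · by_cases h2 : (k : ℕ) = (i : ℕ) + 1
          · have hki : ¬(k = i) := fun h => h1 (by rw [h])
            rw [hL, if_neg h1, if_pos h2, if_neg hki, if_pos h2, zero_add]
            by_cases hck : c k = 0
            · rw [hck]
              simp only [Complex.ofReal_zero, div_zero, map_zero]
              positivity
            · have hck' : (c k : ℂ) ≠ 0 := by exact_mod_cast hck
              rw [Complex.normSq_div, Complex.normSq_conj, Complex.normSq_ofReal]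
              have habs := hoff i k h2
              have hnormSq : Complex.normSq (M i k) ≤ (d i * c k) ^ 2 := by
                rw [← Complex.sq_norm]
                exact pow_le_pow_left₀ (norm_nonneg _) habs 2
              have hckpos : 0 < c k := (hc k).lt_of_ne (Ne.symm hck)
              rw [div_le_iff₀ (mul_pos hckpos hckpos)]
              nlinarith [hc k, hd i]
          · rw [hL0 k i h1 h2, map_zero, if_neg (fun h => h1 (by rw [h])), if_neg h2,
              add_zero]
      calc ∑ k, Complex.normSq (L k i)
          ≤ ∑ k : Fin n, ((if k = i then c i ^ 2 else 0) +
            (if (k : ℕ) = (i : ℕ) + 1 then d i ^ 2 else 0)) :=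
            Finset.sum_le_sum fun k _ => hle k
        _ = (∑ k : Fin n, if k = i then c i ^ 2 else 0) +
            (∑ k : Fin n, if (k : ℕ) = (i : ℕ) + 1 then d i ^ 2 else 0) :=
            Finset.sum_add_distrib
        _ ≤ c i ^ 2 + d i ^ 2 := by
            gcongr
            · rw [Finset.sum_ite_eq' Finset.univ i (fun _ => c i ^ 2)]
              simp
            · by_cases h : (i : ℕ) + 1 < n
              · have : ∀ k : Fin n, ((k : ℕ) = (i : ℕ) + 1) ↔ k = (⟨(i : ℕ) + 1, h⟩ : Fin n) := by
                  intro k; constructor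
                  · intro hk; exact Fin.ext hk
                  · intro hk; rw [hk]
                simp only [this]
                rw [Finset.sum_ite_eq' Finset.univ _ (fun _ => d i ^ 2)]
                simp
              · have hz : ∀ k : Fin n, ¬((k : ℕ) = (i : ℕ) + 1) := by
                  intro k hk; exact h (hk ▸ k.isLt)
                rw [Finset.sum_congr rfl (fun k _ => if_neg (hz k)), Finset.sum_const_zero]
                positivity
    rw [hMii, hAii, ← Complex.ofReal_sub, Complex.zero_le_real]
    have := hdiag i
    linarith
  have hdecomp : M = A + Matrix.diagonal (fun i => M i i - A i i) := by
    ext i j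
    by_cases h : i = j
    · subst h; simp [Matrix.diagonal_apply_eq]
    · rw [Matrix.add_apply, Matrix.diagonal_apply_ne _ h, hoffall i j h, add_zero]
  rw [hdecomp]
  exact (Matrix.posSemidef_conjTranspose_mul_self L).add
    (Matrix.posSemidef_diagonal_iff.mpr hdiagle)
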